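/- Let G = (V, E, s, r) be a countable directed graph, (Q, T) a TCK family for G on a complex Hilbert space H, v ∈ V, and ζ ∈ H a unit vector with Q_v ζ = ζ and T_e* ζ = 0 for every e ∈ r⁻¹(v). Let M be the closed linear span of {T_λ ζ : λ a finite path in G with s(λ) = v}. Then M is invariant under every Q_w, T_e and their adjoints (M is reducing), and there is a unitary U : H_{G,v} → M with U ξ_λ = T_λ ζ for every finite path λ with s(λ) = v, which intertwines the model family with the restriction: U P^v_w = Q_w U and U S^v_e = T_e U for every w ∈ V and e ∈ E (viewing Q_w, T_e as operators on M). -/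

import Mathlib

noncomputable section

open scoped ENNReal InnerProductSpace ComplexOrder
open ContinuousLinearMap

attribute [local instance] Classical.propDecidable

namespace GraphPaper

/-! ### Positivity of operators (without completeness assumptions) -/

/-- A bounded operator on a complex inner ℂ product space is positive if all the
inner ℂ products `⟪T x, x⟫` are nonnegative (this forces them to be real). -/
def IsPosOp {W : Type*} [NormedAddCommGroup W] [InnerProductSpace ℂ W]
    (T : W →L[ℂ] W) : Prop :=
  ∀ x : W, 0 ≤ (inner ℂ (T x) x : ℂ)

/-! ### Toeplitz-Cuntz-Krieger families -/

variable {V E : Type*}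

variable {H : Type*} [NormedAddCommGroup H] [InnerProductSpace ℂ H] [CompleteSpace H]

/-- The Toeplitz-Cuntz-Krieger relations for a family of projections `P` indexed by
vertices and partial isometries `S` indexed by edges. -/
def IsTCK (s r : E → V) (P : V → H →L[ℂ] H) (S : E → H →L[ℂ] H) : Prop :=
  (∀ v, adjoint (P v) = P v) ∧
  (∀ v, P v ∘L P v = P v) ∧
  (∀ v w, v ≠ w → P v ∘L P w = 0) ∧
  (∀ e, adjoint (S e) ∘L S e = P (s e)) ∧
  (∀ (v : V) (F : Finset E), (∀ e ∈ F, r e = v) →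
    IsPosOp (P v - ∑ e ∈ F, S e ∘L adjoint (S e)))

/-- A TCK family is a full Cuntz-Krieger family if for every vertex `v` receiving at
least one edge, the (unconditionally convergent) sum `∑_{r(e) = v} S_e S_e* x` is `P_v x`. -/
def IsFullCK (s r : E → V) (P : V → H →L[ℂ] H) (S : E → H →L[ℂ] H) : Prop :=
  ∀ v : V, (∃ e, r e = v) → ∀ x : H,
    HasSum (fun e : {e : E // r e = v} => S e.1 (adjoint (S e.1) x)) (P v x)

/-- A TCK family is a Cuntz-Krieger family if `∑_{r(e) = v} S_e S_e* = P_v` for every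
vertex `v` receiving finitely many and at least one edge. -/
def IsCK (s r : E → V) (P : V → H →L[ℂ] H) (S : E → H →L[ℂ] H) : Prop :=
  IsTCK s r P S ∧
  ∀ (v : V) (hfin : {e : E | r e = v}.Finite), hfin.toFinset.Nonempty →
    ∑ e ∈ hfin.toFinset, S e ∘L adjoint (S e) = P v

/-- The generators of a TCK family, indexed by vertices and edges. -/
def gen (P : V → H →L[ℂ] H) (S : E → H →L[ℂ] H) : V ⊕ E → H →L[ℂ] H :=
  Sum.elim P S

variable {K : Type*} [NormedAddCommGroup K] [InnerProductSpace ℂ K] [CompleteSpace K]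

/-- `(Q, T)` on `K` dilates `(P, S)` on `H` via the isometry `W : H → K`:
compressions of arbitrary nonempty words in the generators agree. -/
def Dilates (P : V → H →L[ℂ] H) (S : E → H →L[ℂ] H)
    (Q : V → K →L[ℂ] K) (T : E → K →L[ℂ] K) (W : H →L[ℂ] K) : Prop :=
  (∀ x : H, ‖W x‖ = ‖x‖) ∧
  ∀ l : List (V ⊕ E), l ≠ [] →
    adjoint W ∘L (l.map (gen Q T)).prod ∘L W = (l.map (gen P S)).prod

/-! ### Finite paths -/

/-- A finite path `λ = e_n ⋯ e_1` in the directed graph determined by the source and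
range maps `s r : E → V`, together with a base vertex `src` which is the source of the
path.  The edges are listed as `[e_n, …, e_1]`, with the consecutive compatibility
`s (e_{i+1}) = r (e_i)`, and (when the path is nonempty) `s (e_1) = src`.
A path with no edges is the length-zero path at the vertex `src`. -/
structure GPath (s r : E → V) : Type _ where
  src : V
  edges : List E
  chain : edges.Chain' fun e f => s e = r f
  src_eq : ∀ e ∈ edges.getLast?, s e = src

variable {s r : E → V}

/-- The range of a finite path. -/
def GPath.rng (p : GPath s r) : V := ((p.edges.head?).map r).getD p.src

theorem GPath.ext' {p q : GPath s r} (h1 : p.src = q.src) (h2 : p.edges = q.edges) :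
    p = q := by
  cases p; cases q; simp_all

/-- The length-zero path at a vertex. -/
def GPath.nil (s r : E → V) (v : V) : GPath s r where
  src := v
  edges := []
  chain := List.IsChain.nil
  src_eq := by simp

/-- The tail of a path (removing the first, i.e. last-applied, edge). -/
def GPath.tail (p : GPath s r) : GPath s r where
  src := p.src
  edges := p.edges.tail
  chain := p.chain.tail
  src_eq := by
    intro f hf
    apply p.src_eq
    rcases hp : p.edges with - | ⟨a, t⟩
    · rw [hp] at hf; simp at hf
    · rw [hp] at hf
      rcases t with - | ⟨b, t'⟩
      · simp at hf
      · simpa [List.getLast?_cons_cons] using hf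

/-- The operator `T_λ = T_{e_n} ⋯ T_{e_1}` associated to a finite path `λ`;
for the length-zero path at `v` it is `P_v`. -/
def pathOp (P : V → H →L[ℂ] H) (S : E → H →L[ℂ] H) (p : GPath s r) : H →L[ℂ] H :=
  if p.edges.isEmpty then P p.src else (p.edges.map S).prod

/-- Paths with source `v`. -/
abbrev SPath (s r : E → V) (v : V) : Type _ := {p : GPath s r // p.src = v}

/-! ### The model space and the model TCK family -/

/-- The model Hilbert space `H_{G,v} = ℓ²` of the set of paths with source `v`. -/
abbrev HGv (s r : E → V) (v : V) : Type _ := lp (fun _ : SPath s r v => ℂ) 2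

/-- The basis vector `ξ_λ` of the model space. -/
def xi {v : V} (p : SPath s r v) : HGv s r v := lp.single 2 p 1

/-- Pulling back a function `x : ι → ℂ` along a partially defined map `f`. -/
def pullFun {ι κ : Type*} (f : κ → Option ι) (x : ι → ℂ) (k : κ) : ℂ :=
  ((f k).map x).getD 0

theorem pullFun_core {ι κ : Type*} (f : κ → Option ι)
    (hf : ∀ ⦃k k' : κ⦄ ⦃i : ι⦄, f k = some i → f k' = some i → k = k')
    (x : lp (fun _ : ι => ℂ) 2) :
    Memℓp (pullFun f ⇑x) 2 ∧
      ∑' k : κ, ‖pullFun f ⇑x k‖ ^ (2 : ℝ) ≤ ∑' i : ι, ‖x i‖ ^ (2 : ℝ) := by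
  classical
  have hp : 0 < (2 : ℝ≥0∞).toReal := by norm_num
  have hx : Summable fun i : ι => ‖x i‖ ^ (2 : ℝ) := by
    have := lp.memℓp x
    rw [memℓp_gen_iff hp] at this
    simpa using this
  set σ : Set κ := {k : κ | (f k).isSome} with hσ
  have hmem : ∀ k : σ, ∃ i, f (k : κ) = some i := fun k => Option.isSome_iff_exists.mp k.2
  set h : σ → ι := fun k => (f (k : κ)).get k.2 with hh
  have hfk : ∀ k : σ, f (k : κ) = some (h k) := fun k => (Option.some_get k.2).symm
  have hinj : Function.Injective h := by
    intro a b hab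
    have ha := hfk a
    have hb := hfk b
    rw [hab] at ha
    exact Subtype.ext (hf ha hb)
  have hval : ∀ k : σ, pullFun f ⇑x (k : κ) = x (h k) := by
    intro k
    simp [pullFun, hfk k]
  set g : κ → ℝ := fun k => ‖pullFun f ⇑x k‖ ^ (2 : ℝ) with hg
  have hsupp : Function.support g ⊆ σ := by
    intro k hk
    by_contra hks
    have : f k = none := by
      rw [hσ] at hks
      simpa [Option.isNone_iff_eq_none, Option.not_isSome_iff_eq_none] using hks
    apply hk
    simp [hg, pullFun, this, Real.zero_rpow (by norm_num : (2:ℝ) ≠ 0)]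
  have hcomp : (g ∘ (Subtype.val : σ → κ)) = (fun i => ‖x i‖ ^ (2 : ℝ)) ∘ h := by
    funext k
    simp [hg, Function.comp, hval k]
  have hsummσ : Summable (g ∘ (Subtype.val : σ → κ)) := by
    rw [hcomp]; exact hx.comp_injective hinj
  have hsumm : Summable g := by
    obtain ⟨a, ha⟩ := hsummσ
    exact ⟨a, (hasSum_subtype_iff_of_support_subset hsupp).mp ha⟩
  constructor
  · apply memℓp_gen
    have : (fun k => ‖pullFun f ⇑x k‖ ^ (2 : ℝ≥0∞).toReal) = g := by
      funext k; simp [hg]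
    rw [this]
    exact hsumm
  · have h1 : ∑' k : κ, g k = ∑' k : σ, g k := (tsum_subtype_eq_of_support_subset hsupp).symm
    have h2 : ∑' k : σ, g k ≤ ∑' i : ι, ‖x i‖ ^ (2 : ℝ) := by
      have := tsum_comp_le_tsum_of_inj hx
        (fun i => Real.rpow_nonneg (norm_nonneg _) _) hinj
      calc ∑' k : σ, g k = ∑' k : σ, ((fun i => ‖x i‖ ^ (2 : ℝ)) ∘ h) k := by
            rw [← hcomp]; rfl
        _ ≤ ∑' i : ι, ‖x i‖ ^ (2 : ℝ) := this
    exact h1.trans_le h2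

/-- The bounded operator `lp² ι → lp² κ` induced by a partially defined injection. -/
def pullCLM {ι κ : Type*} (f : κ → Option ι)
    (hf : ∀ ⦃k k' : κ⦄ ⦃i : ι⦄, f k = some i → f k' = some i → k = k') :
    lp (fun _ : ι => ℂ) 2 →L[ℂ] lp (fun _ : κ => ℂ) 2 :=
  LinearMap.mkContinuous
    { toFun := fun x => ⟨pullFun f ⇑x, (pullFun_core f hf x).1⟩
      map_add' := by
        intro x y
        apply lp.ext
        funext k
        show pullFun f ⇑(x + y) k = pullFun f ⇑x k + pullFun f ⇑y k
        rw [lp.coeFn_add]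
        unfold pullFun
        cases f k <;> simp
      map_smul' := by
        intro c x
        apply lp.ext
        funext k
        show pullFun f ⇑(c • x) k = c • pullFun f ⇑x k
        rw [lp.coeFn_smul]
        unfold pullFun
        cases f k <;> simp }
    1
    (by
      intro x
      have hp : 0 < (2 : ℝ≥0∞).toReal := by norm_num
      rw [one_mul]
      set y : lp (fun _ : κ => ℂ) 2 := ⟨pullFun f ⇑x, (pullFun_core f hf x).1⟩ with hy
      show ‖y‖ ≤ ‖x‖
      have hle := (pullFun_core f hf x).2
      have h1 : ‖y‖ ^ (2:ℝ) = ∑' k : κ, ‖pullFun f ⇑x k‖ ^ (2 : ℝ) := by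
        simpa using lp.norm_rpow_eq_tsum hp y
      have h2 : ‖x‖ ^ (2:ℝ) = ∑' i : ι, ‖x i‖ ^ (2 : ℝ) := by
        simpa using lp.norm_rpow_eq_tsum hp x
      have key : ‖y‖ ^ (2:ℝ) ≤ ‖x‖ ^ (2:ℝ) := by rw [h1, h2]; exact hle
      have k2 : ‖y‖ ^ (2:ℕ) ≤ ‖x‖ ^ (2:ℕ) := by
        rw [← Real.rpow_natCast ‖y‖ 2, ← Real.rpow_natCast ‖x‖ 2]
        exact_mod_cast key
      have hs := Real.sqrt_le_sqrt k2
      rwa [Real.sqrt_sq (norm_nonneg y), Real.sqrt_sq (norm_nonneg x)] at hs)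

/-- Decoding map for the model projection at `w`. -/
def decodeP (v w : V) (p : SPath s r v) : Option (SPath s r v) :=
  if p.1.rng = w then some p else none

/-- Decoding map for the model partial isometry at `e`. -/
def decodeS (v : V) (e : E) (p : SPath s r v) : Option (SPath s r v) :=
  if p.1.edges.head? = some e then some ⟨p.1.tail, p.2⟩ else none

theorem decodeP_inj (v w : V) :
    ∀ ⦃k k' : SPath s r v⦄ ⦃i : SPath s r v⦄,
      decodeP v w k = some i → decodeP v w k' = some i → k = k' := by
  intro k k' i h1 h2
  unfold decodeP at h1 h2
  split_ifs at h1 h2 <;> simp_all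

theorem decodeS_inj (v : V) (e : E) :
    ∀ ⦃k k' : SPath s r v⦄ ⦃i : SPath s r v⦄,
      decodeS v e k = some i → decodeS v e k' = some i → k = k' := by
  intro k k' i h1 h2
  unfold decodeS at h1 h2
  split_ifs at h1 h2 with he1 he2
  have hi1 := Option.some.inj h1
  have hi2 := Option.some.inj h2
  apply Subtype.ext
  apply GPath.ext'
  · rw [k.2, k'.2]
  · obtain ⟨t1, ht1⟩ := List.head?_eq_some_iff.mp he1
    obtain ⟨t2, ht2⟩ := List.head?_eq_some_iff.mp he2
    have e1 : k.1.tail.edges = t1 := by simp [GPath.tail, ht1]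
    have e2 : k'.1.tail.edges = t2 := by simp [GPath.tail, ht2]
    have : k.1.tail.edges = k'.1.tail.edges := by
      rw [show k.1.tail = i.1 from congrArg Subtype.val hi1,
        show k'.1.tail = i.1 from congrArg Subtype.val hi2]
    rw [ht1, ht2]
    rw [e1, e2] at this
    rw [this]

/-- The model projection `P^v_w` on `H_{G,v}`: the orthogonal projection onto the span
of the basis vectors `ξ_λ` with `r(λ) = w`. -/
def modelP (s r : E → V) (v w : V) : HGv s r v →L[ℂ] HGv s r v :=
  pullCLM (decodeP v w) (decodeP_inj v w)

/-- The model partial isometry `S^v_e` on `H_{G,v}`: it maps `ξ_λ` to `ξ_{eλ}`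
when `s(e) = r(λ)`, and to `0` otherwise. -/
def modelS (s r : E → V) (v : V) (e : E) : HGv s r v →L[ℂ] HGv s r v :=
  pullCLM (decodeS v e) (decodeS_inj v e)

/-! ### Reducing subspaces, wandering spaces, maximality -/

universe u

/-- A subspace is reducing for a family of operators if it is invariant under all of them
and all their adjoints. -/
def Reduces (Q : V → H →L[ℂ] H) (T : E → H →L[ℂ] H) (M : Submodule ℂ H) : Prop :=
  (∀ w : V, ∀ x ∈ M, Q w x ∈ M ∧ adjoint (Q w) x ∈ M) ∧
  (∀ e : E, ∀ x ∈ M, T e x ∈ M ∧ adjoint (T e) x ∈ M)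

/-- The wandering space `W_v = {x | Q_v x = x, T_e* x = 0 for all e ∈ r⁻¹(v)}`. -/
def wandering (s r : E → V) (Q : V → H →L[ℂ] H) (T : E → H →L[ℂ] H) (v : V) :
    Submodule ℂ H where
  carrier := {x : H | Q v x = x ∧ ∀ e : E, r e = v → adjoint (T e) x = 0}
  add_mem' := by
    intro a b ha hb
    refine ⟨?_, fun e he => ?_⟩
    · rw [map_add, ha.1, hb.1]
    · rw [map_add, ha.2 e he, hb.2 e he, add_zero]
  zero_mem' := ⟨map_zero _, fun e _ => map_zero _⟩
  smul_mem' := by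
    intro c x hx
    refine ⟨?_, fun e he => ?_⟩
    · rw [map_smul, hx.1]
    · rw [map_smul, hx.2 e he, smul_zero]

/-- The restriction of a TCK family to a reducing subspace `M` is a full Cuntz-Krieger
family (expressed via the action on vectors of `M` in the ambient space). -/
def IsFullCKOn (s r : E → V) (Q : V → H →L[ℂ] H) (T : E → H →L[ℂ] H)
    (M : Submodule ℂ H) : Prop :=
  ∀ v : V, (∃ e, r e = v) → ∀ x ∈ M,
    HasSum (fun e : {e : E // r e = v} => T e.1 (adjoint (T e.1) x)) (Q v x)

/-- A TCK family is maximal if for every TCK family dilating it, the range of the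
dilation isometry is reducing. -/
def IsMaxTCK {V E : Type*} (s r : E → V) {H : Type u} [NormedAddCommGroup H]
    [InnerProductSpace ℂ H] [CompleteSpace H]
    (P : V → H →L[ℂ] H) (S : E → H →L[ℂ] H) : Prop :=
  ∀ (K : Type u) [NormedAddCommGroup K] [InnerProductSpace ℂ K] [CompleteSpace K],
    ∀ (Q : V → K →L[ℂ] K) (T : E → K →L[ℂ] K) (W : H →L[ℂ] K),
      IsTCK s r Q T → Dilates P S Q T W →
        ∀ (g : V ⊕ E) (x : H),
          gen Q T g (W x) ∈ Set.range W ∧ adjoint (gen Q T g) (W x) ∈ Set.range W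

end GraphPaper

namespace GraphPaper

/-- The closed subspace generated by the vectors `T_λ ζ` over paths `λ` with source `v`. -/
def genSubspace {V E : Type*} {H : Type*} [NormedAddCommGroup H] [InnerProductSpace ℂ H]
    [CompleteSpace H] (s r : E → V) (Q : V → H →L[ℂ] H) (T : E → H →L[ℂ] H)
    (v : V) (ζ : H) : Submodule ℂ H :=
  (Submodule.span ℂ (Set.range fun p : SPath s r v => pathOp Q T p.1 ζ)).topologicalClosure

section Aux

variable {V E : Type*} {H : Type*} [NormedAddCommGroup H] [InnerProductSpace ℂ H]
    [CompleteSpace H] {s r : E → V} {Q : V → H →L[ℂ] H} {T : E → H →L[ℂ] H}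

theorem eq_zero_of_inner_self_nonpos {u : H} (hu : (inner ℂ u u : ℂ) ≤ 0) : u = 0 := by
  have h1 : (inner ℂ u u : ℂ) = ((‖u‖ ^ 2 : ℝ) : ℂ) := by
    rw [inner_self_eq_norm_sq_to_K]; norm_cast
  rw [h1] at hu
  have h2 : (‖u‖ ^ 2 : ℝ) ≤ 0 := by exact_mod_cast hu
  have h3 : ‖u‖ = 0 := by nlinarith [norm_nonneg u]
  exact norm_eq_zero.mp h3

theorem adjT_of_Q (h : IsTCK s r Q T) (e : E) (x : H) :
    adjoint (T e) (Q (r e) x) = adjoint (T e) x := by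
  have hpos1 := h.2.2.2.2 (r e) {e} (by simp)
  rw [Finset.sum_singleton] at hpos1
  set y := x - Q (r e) x with hy
  have hQy : Q (r e) y = 0 := by
    have hid := congrArg (fun A : H →L[ℂ] H => A x) (h.2.1 (r e))
    simp only [ContinuousLinearMap.comp_apply] at hid
    simp [hy, map_sub, hid]
  have hval := hpos1 y
  have hexp : ((Q (r e) - T e ∘L adjoint (T e)) y) = -(T e (adjoint (T e) y)) := by
    simp [ContinuousLinearMap.sub_apply, ContinuousLinearMap.comp_apply, hQy]
  rw [hexp] at hval
  have hin : (inner ℂ (-(T e (adjoint (T e) y))) y : ℂ)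
      = -(inner ℂ (adjoint (T e) y) (adjoint (T e) y) : ℂ) := by
    rw [inner_neg_left]
    congr 1
    exact (adjoint_inner_right (T e) (adjoint (T e) y) y).symm
  rw [hin] at hval
  have hu : adjoint (T e) y = 0 := eq_zero_of_inner_self_nonpos (neg_nonneg.mp hval)
  rw [hy, map_sub] at hu
  exact (sub_eq_zero.mp hu).symm

theorem Q_comp_T (h : IsTCK s r Q T) (e : E) : Q (r e) ∘L T e = T e := by
  have h1 : adjoint (T e) ∘L Q (r e) = adjoint (T e) :=
    ContinuousLinearMap.ext fun x => adjT_of_Q h e x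
  have h2 := congrArg (fun A : H →L[ℂ] H => adjoint A) h1
  simp only [adjoint_comp, adjoint_adjoint] at h2
  rwa [h.1 (r e)] at h2

theorem T_comp_Qs (h : IsTCK s r Q T) (e : E) (x : H) : T e (Q (s e) x) = T e x := by
  set y := Q (s e) x - x with hy
  have hQy : Q (s e) y = 0 := by
    have hid := congrArg (fun A : H →L[ℂ] H => A x) (h.2.1 (s e))
    simp only [ContinuousLinearMap.comp_apply] at hid
    simp [hy, map_sub, hid]
  have h2 : adjoint (T e) (T e y) = Q (s e) y := by
    have := congrArg (fun A : H →L[ℂ] H => A y) (h.2.2.2.1 e)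
    simpa using this
  have hinner : (inner ℂ (T e y) (T e y) : ℂ) = 0 := by
    have h1 : (inner ℂ (adjoint (T e) (T e y)) y : ℂ) = inner ℂ (T e y) (T e y) :=
      adjoint_inner_left (T e) y (T e y)
    rw [h2, hQy] at h1
    simpa using h1.symm
  have hz : T e y = 0 := inner_self_eq_zero.mp hinner
  rw [hy, map_sub] at hz
  exact sub_eq_zero.mp hz

theorem Q_T_zero (h : IsTCK s r Q T) {w : V} {e : E} (hw : w ≠ r e) (x : H) :
    Q w (T e x) = 0 := by
  have h1 : T e x = Q (r e) (T e x) := by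
    have := congrArg (fun A : H →L[ℂ] H => A x) (Q_comp_T h e); simpa using this.symm
  rw [h1]
  have := congrArg (fun A : H →L[ℂ] H => A (T e x)) (h.2.2.1 w (r e) hw)
  simpa using this

theorem adjT_T_zero (h : IsTCK s r Q T) {e f : E} (hef : e ≠ f) (x : H) :
    adjoint (T e) (T f x) = 0 := by
  by_cases hr : r e = r f
  · have hpos1 := h.2.2.2.2 (r f) {e, f} (by
      intro g hg
      simp only [Finset.mem_insert, Finset.mem_singleton] at hg
      rcases hg with rfl | rfl
      · exact hr
      · rfl)
    rw [Finset.sum_pair hef] at hpos1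
    set y := T f x with hy
    have hQy : Q (r f) y = y := by
      have := congrArg (fun A : H →L[ℂ] H => A x) (Q_comp_T h f); simpa [hy] using this
    have hval := hpos1 y
    have hexp : ((Q (r f) - (T e ∘L adjoint (T e) + T f ∘L adjoint (T f))) y) =
        y - T e (adjoint (T e) y) - T f (adjoint (T f) y) := by
      simp only [ContinuousLinearMap.sub_apply, ContinuousLinearMap.add_apply,
        ContinuousLinearMap.comp_apply, hQy]
      abel
    rw [hexp] at hval
    have hTf : adjoint (T f) (T f x) = Q (s f) x := by
      have := congrArg (fun A : H →L[ℂ] H => A x) (h.2.2.2.1 f)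
      simpa using this
    have key2 : (inner ℂ (T f (adjoint (T f) y)) y : ℂ) = inner ℂ y y := by
      have h1 : (inner ℂ (T f (adjoint (T f) y)) y : ℂ)
          = inner ℂ (adjoint (T f) y) (adjoint (T f) y) :=
        (adjoint_inner_right (T f) (adjoint (T f) y) y).symm
      have h3 : (inner ℂ y y : ℂ) = inner ℂ (Q (s f) x) (Q (s f) x) := by
        have e1 : (inner ℂ (adjoint (T f) (T f x)) x : ℂ) = inner ℂ (T f x) (T f x) :=
          adjoint_inner_left (T f) x (T f x)
        rw [hTf] at e1
        have e3 : (inner ℂ (Q (s f) x) x : ℂ) = inner ℂ (Q (s f) x) (Q (s f) x) := by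
          have e4 : (inner ℂ (adjoint (Q (s f)) (Q (s f) x)) x : ℂ)
              = inner ℂ (Q (s f) x) (Q (s f) x) := adjoint_inner_left (Q (s f)) x (Q (s f) x)
          have e5 : adjoint (Q (s f)) (Q (s f) x) = Q (s f) x := by
            rw [h.1 (s f)]
            have hid := congrArg (fun A : H →L[ℂ] H => A x) (h.2.1 (s f))
            simpa using hid
          rwa [e5] at e4
        rw [hy, ← e1, e3]
      rw [h1, hy, hTf, ← h3]
    have hfin : (0:ℂ) ≤ -(inner ℂ (adjoint (T e) y) (adjoint (T e) y) : ℂ) := by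
      have hsub : (inner ℂ (y - T e (adjoint (T e) y) - T f (adjoint (T f) y)) y : ℂ)
          = inner ℂ y y - inner ℂ (T e (adjoint (T e) y)) y
            - inner ℂ (T f (adjoint (T f) y)) y := by
        rw [inner_sub_left, inner_sub_left]
      rw [hsub, key2] at hval
      have h1 : (inner ℂ (T e (adjoint (T e) y)) y : ℂ)
          = inner ℂ (adjoint (T e) y) (adjoint (T e) y) :=
        (adjoint_inner_right (T e) (adjoint (T e) y) y).symm
      rw [h1] at hval
      convert hval using 1
      ring
    have := eq_zero_of_inner_self_nonpos (neg_nonneg.mp hfin)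
    simpa [hy] using this
  · have h1 : T f x = Q (r f) (T f x) := by
      have := congrArg (fun A : H →L[ℂ] H => A x) (Q_comp_T h f); simpa using this.symm
    rw [h1, ← adjT_of_Q h e]
    have h0 : Q (r e) (Q (r f) (T f x)) = 0 := by
      have := congrArg (fun A : H →L[ℂ] H => A (T f x)) (h.2.2.1 (r e) (r f) hr)
      simpa using this
    rw [h0, map_zero]

/-- Prepending an edge to a path. -/
def GPath.cons (e : E) (p : GPath s r) (h : s e = p.rng) : GPath s r where
  src := p.src
  edges := e :: p.edges
  chain := by
    show List.IsChain _ (e :: p.edges)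
    rw [List.isChain_cons]
    refine ⟨fun b hb => ?_, p.chain⟩
    have hb' : p.edges.head? = some b := hb
    rw [h]
    unfold GPath.rng
    rw [hb']
    rfl
  src_eq := by
    intro f hf
    rcases hp : p.edges with - | ⟨a, t⟩
    · rw [hp] at hf
      simp only [List.getLast?_singleton, Option.mem_some_iff] at hf
      subst hf
      rw [h]
      unfold GPath.rng
      rw [hp]
      rfl
    · rw [hp, List.getLast?_cons_cons] at hf
      rw [← hp] at hf
      exact p.src_eq f hf

theorem GPath.tail_cons (e : E) (p : GPath s r) (h : s e = p.rng) :
    (GPath.cons e p h).tail = p := GPath.ext' rfl rfl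

theorem GPath.rng_cons (e : E) (p : GPath s r) (h : s e = p.rng) :
    (GPath.cons e p h).rng = r e := rfl

theorem GPath.src_eq_rng_tail (p : GPath s r) {f : E} {t : List E} (hp : p.edges = f :: t) :
    s f = p.tail.rng := by
  rcases t with - | ⟨g, t'⟩
  · have h1 : p.tail.rng = p.src := by simp [GPath.rng, GPath.tail, hp]
    rw [h1]
    exact p.src_eq f (by rw [hp]; simp)
  · have hc := p.chain
    rw [hp] at hc
    have h2 := (List.isChain_cons_cons.mp hc).1
    have h1 : p.tail.rng = r g := by simp [GPath.rng, GPath.tail, hp]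
    rw [h1]
    exact h2

variable {v : V} {ζ : H}

theorem pathOp_nil (hζ1 : Q v ζ = ζ) (p : SPath s r v) (hp : p.1.edges = []) :
    pathOp Q T p.1 ζ = ζ := by
  simp [pathOp, hp, p.2, hζ1]

theorem pathOp_cons (hζ1 : Q v ζ = ζ) (p : SPath s r v) {f : E} {t : List E}
    (hp : p.1.edges = f :: t) :
    pathOp Q T p.1 ζ = T f (pathOp Q T p.1.tail ζ) := by
  have htail : p.1.tail.edges = t := by simp [GPath.tail, hp]
  rcases t with - | ⟨g, t'⟩
  · have hsrc : p.1.tail.src = v := p.2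
    simp [pathOp, hp, htail, hsrc, hζ1]
  · simp only [pathOp, hp, htail, List.isEmpty_cons, List.map_cons, List.prod_cons]
    rfl

theorem Q_pathOp (h : IsTCK s r Q T) (hζ1 : Q v ζ = ζ) (p : SPath s r v) (w : V) :
    Q w (pathOp Q T p.1 ζ) = if p.1.rng = w then pathOp Q T p.1 ζ else 0 := by
  rcases hp : p.1.edges with - | ⟨f, t⟩
  · have hrng : p.1.rng = v := by simp [GPath.rng, hp, p.2]
    rw [pathOp_nil hζ1 p hp, hrng]
    by_cases hw : v = w
    · subst hw; rw [if_pos rfl, hζ1]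
    · rw [if_neg hw, ← hζ1]
      have := congrArg (fun A : H →L[ℂ] H => A ζ) (h.2.2.1 w v (Ne.symm hw))
      simpa using this
  · have hrng : p.1.rng = r f := by simp [GPath.rng, hp]
    rw [pathOp_cons hζ1 p hp, hrng]
    by_cases hw : r f = w
    · subst hw; rw [if_pos rfl]
      have := congrArg (fun A : H →L[ℂ] H => A (pathOp Q T p.1.tail ζ)) (Q_comp_T h f)
      simpa using this
    · rw [if_neg hw]
      exact Q_T_zero h (Ne.symm hw) _

theorem adjT_zeta (h : IsTCK s r Q T) (hζ1 : Q v ζ = ζ)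
    (hζ2 : ∀ e : E, r e = v → adjoint (T e) ζ = 0) (e : E) : adjoint (T e) ζ = 0 := by
  by_cases hre : r e = v
  · exact hζ2 e hre
  · rw [← adjT_of_Q h e, ← hζ1]
    have h0 : Q (r e) (Q v ζ) = 0 := by
      have := congrArg (fun A : H →L[ℂ] H => A ζ) (h.2.2.1 (r e) v hre)
      simpa using this
    rw [h0, map_zero]

theorem T_pathOp_eq (hζ1 : Q v ζ = ζ) (p : SPath s r v) (e : E) (he : s e = p.1.rng) :
    T e (pathOp Q T p.1 ζ) = pathOp Q T (GPath.cons e p.1 he) ζ := by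
  have hthis := pathOp_cons (Q := Q) (T := T) hζ1
    (⟨GPath.cons e p.1 he, p.2⟩ : SPath s r v) (f := e) (t := p.1.edges) rfl
  rw [show (GPath.cons e p.1 he).tail = p.1 from GPath.tail_cons e p.1 he] at hthis
  exact hthis.symm

theorem T_pathOp_ne (h : IsTCK s r Q T) (hζ1 : Q v ζ = ζ) (p : SPath s r v) (e : E)
    (he : ¬ s e = p.1.rng) : T e (pathOp Q T p.1 ζ) = 0 := by
  rw [← T_comp_Qs h e]
  have hq := Q_pathOp h hζ1 p (s e)
  rw [if_neg (fun hh => he hh.symm)] at hq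
  rw [hq, map_zero]

theorem adjT_pathOp (h : IsTCK s r Q T) (hζ1 : Q v ζ = ζ)
    (hζ2 : ∀ e : E, r e = v → adjoint (T e) ζ = 0) (p : SPath s r v) (e : E) :
    adjoint (T e) (pathOp Q T p.1 ζ) =
      if p.1.edges.head? = some e then pathOp Q T p.1.tail ζ else 0 := by
  rcases hp : p.1.edges with - | ⟨f, t⟩
  · rw [pathOp_nil hζ1 p hp, if_neg (by simp)]
    exact adjT_zeta h hζ1 hζ2 e
  · rw [pathOp_cons hζ1 p hp]
    by_cases hef : e = f
    · subst hef
      rw [if_pos (show (e :: t).head? = some e from rfl)]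
      have h1 : adjoint (T e) (T e (pathOp Q T p.1.tail ζ))
          = Q (s e) (pathOp Q T p.1.tail ζ) := by
        have := congrArg (fun A : H →L[ℂ] H => A (pathOp Q T p.1.tail ζ)) (h.2.2.2.1 e)
        simpa using this
      rw [h1]
      have h2 : s e = p.1.tail.rng := GPath.src_eq_rng_tail p.1 hp
      have h3 := Q_pathOp h hζ1 (⟨p.1.tail, p.2⟩ : SPath s r v) (s e)
      rw [if_pos h2.symm] at h3
      exact h3
    · rw [if_neg (by
        simp only [List.head?_cons, Option.some.injEq]
        exact fun hh => hef hh.symm)]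
      exact adjT_T_zero h hef _

theorem inner_pathOp (h : IsTCK s r Q T) (hunit : ‖ζ‖ = 1) (hζ1 : Q v ζ = ζ)
    (hζ2 : ∀ e : E, r e = v → adjoint (T e) ζ = 0) :
    ∀ (l : List E) (q : SPath s r v), q.1.edges = l → ∀ p : SPath s r v,
      (inner ℂ (pathOp Q T p.1 ζ) (pathOp Q T q.1 ζ) : ℂ) = if p = q then 1 else 0 := by
  intro l
  induction l with
  | nil =>
    intro q hq p
    rw [pathOp_nil hζ1 q hq]
    rcases hp : p.1.edges with - | ⟨f, t⟩
    · have hpq : p = q := Subtype.ext (GPath.ext' (p.2.trans q.2.symm) (hp.trans hq.symm))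
      rw [if_pos hpq, pathOp_nil hζ1 p hp, inner_self_eq_norm_sq_to_K, hunit]
      norm_num
    · have hne : p ≠ q := by
        intro hh; subst hh; rw [hq] at hp; cases hp
      rw [if_neg hne, pathOp_cons hζ1 p hp, ← adjoint_inner_right,
        adjT_zeta h hζ1 hζ2 f, inner_zero_right]
  | cons e t IH =>
    intro q hq p
    rw [pathOp_cons hζ1 q hq, ← adjoint_inner_left, adjT_pathOp h hζ1 hζ2 p e]
    by_cases hhead : p.1.edges.head? = some e
    · rw [if_pos hhead]
      have IH' := IH (⟨q.1.tail, q.2⟩ : SPath s r v) (by simp [GPath.tail, hq])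
        (⟨p.1.tail, p.2⟩ : SPath s r v)
      rw [IH']
      have htq : ((⟨p.1.tail, p.2⟩ : SPath s r v) = ⟨q.1.tail, q.2⟩) ↔ p = q := by
        constructor
        · intro hh
          obtain ⟨tp, hpe⟩ := List.head?_eq_some_iff.mp hhead
          have h1 : p.1.tail.edges = tp := by simp [GPath.tail, hpe]
          have h2 : q.1.tail.edges = t := by simp [GPath.tail, hq]
          have h3 : p.1.tail.edges = q.1.tail.edges := by
            rw [show p.1.tail = q.1.tail from congrArg (fun z : SPath s r v => z.1) hh]
          apply Subtype.ext
          apply GPath.ext' (p.2.trans q.2.symm)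
          rw [hpe, hq, h1, h2] at *
          rw [hpe, hq]
          rw [h1, h2] at h3
          rw [h3]
        · intro hh; subst hh; rfl
      rw [if_congr htq rfl rfl]
    · rw [if_neg hhead, inner_zero_left, if_neg (by
        intro hh; subst hh
        exact hhead (by rw [hq]; rfl))]

theorem xi_apply (p k : SPath s r v) : xi p k = if k = p then 1 else 0 := by
  by_cases hkp : k = p
  · subst hkp; rw [if_pos rfl]; exact lp.single_apply_self 2 k 1
  · rw [if_neg hkp]; exact lp.single_apply_ne 2 p 1 hkp

theorem modelP_xi (w : V) (p : SPath s r v) :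
    modelP s r v w (xi p) = if p.1.rng = w then xi p else 0 := by
  by_cases hw : p.1.rng = w
  · rw [if_pos hw]
    apply lp.ext
    funext k
    show pullFun (decodeP v w) (⇑(xi p)) k = xi p k
    by_cases hk : k.1.rng = w
    · simp [pullFun, decodeP, hk]
    · have hkp : k ≠ p := fun hh => hk (by rw [hh, hw])
      simp [pullFun, decodeP, hk, xi_apply, hkp]
  · rw [if_neg hw]
    apply lp.ext
    funext k
    show pullFun (decodeP v w) (⇑(xi p)) k = (0 : ∀ _ : SPath s r v, ℂ) k
    by_cases hk : k.1.rng = w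
    · have hkp : k ≠ p := fun hh => hw (by rw [← hh, hk])
      simp [pullFun, decodeP, hk, xi_apply, hkp]
    · simp [pullFun, decodeP, hk]

theorem modelS_xi (e : E) (p : SPath s r v) :
    modelS s r v e (xi p) =
      if h : s e = p.1.rng then xi (⟨GPath.cons e p.1 h, p.2⟩ : SPath s r v) else 0 := by
  by_cases hse : s e = p.1.rng
  · rw [dif_pos hse]
    apply lp.ext
    funext k
    show pullFun (decodeS v e) (⇑(xi p)) k = xi (⟨GPath.cons e p.1 hse, p.2⟩ : SPath s r v) k
    rw [xi_apply]
    by_cases hk : k.1.edges.head? = some e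
    · have hstep : pullFun (decodeS v e) (⇑(xi p)) k = xi p ⟨k.1.tail, k.2⟩ := by
        simp [pullFun, decodeS, hk]
      rw [hstep, xi_apply]
      have hiff : ((⟨k.1.tail, k.2⟩ : SPath s r v) = p)
          ↔ (k = ⟨GPath.cons e p.1 hse, p.2⟩) := by
        constructor
        · intro hh
          obtain ⟨tk, htk⟩ := List.head?_eq_some_iff.mp hk
          have h1 : k.1.tail.edges = tk := by simp [GPath.tail, htk]
          have h2 : p.1.edges = tk := by
            rw [← congrArg (fun z : SPath s r v => z.1.edges) hh]; exact h1
          apply Subtype.ext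
          apply GPath.ext'
          · exact k.2.trans p.2.symm
          · show k.1.edges = e :: p.1.edges
            rw [htk, h2]
        · intro hh; subst hh
          exact Subtype.ext (GPath.tail_cons e p.1 hse)
      rw [if_congr hiff rfl rfl]
    · have hstep : pullFun (decodeS v e) (⇑(xi p)) k = 0 := by
        simp [pullFun, decodeS, hk]
      rw [hstep, if_neg (by
        intro hh; subst hh
        exact hk rfl)]
  · rw [dif_neg hse]
    apply lp.ext
    funext k
    show pullFun (decodeS v e) (⇑(xi p)) k = (0 : ∀ _ : SPath s r v, ℂ) k
    by_cases hk : k.1.edges.head? = some e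
    · have hstep : pullFun (decodeS v e) (⇑(xi p)) k = xi p ⟨k.1.tail, k.2⟩ := by
        simp [pullFun, decodeS, hk]
      rw [hstep, xi_apply]
      have hne : (⟨k.1.tail, k.2⟩ : SPath s r v) ≠ p := by
        intro hh
        obtain ⟨tk, htk⟩ := List.head?_eq_some_iff.mp hk
        have h1 : s e = k.1.tail.rng := GPath.src_eq_rng_tail k.1 htk
        rw [show k.1.tail = p.1 from congrArg (fun z : SPath s r v => z.1) hh] at h1
        exact hse h1
      rw [if_neg hne]
      rfl
    · simp [pullFun, decodeS, hk]

theorem dense_span_xi (s r : E → V) (v : V) :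
    Dense ((Submodule.span ℂ (Set.range (xi : SPath s r v → HGv s r v))) :
      Set (HGv s r v)) := by
  intro x
  have hsum := lp.hasSum_single (E := fun _ : SPath s r v => ℂ) (p := 2) (by norm_num) x
  refine mem_closure_of_tendsto hsum (Filter.Eventually.of_forall fun F => ?_)
  refine Submodule.sum_mem _ fun i _ => ?_
  have h1 : lp.single 2 i (x i) = (x i) • xi i := by
    rw [xi, ← lp.single_smul, smul_eq_mul, mul_one]
  rw [h1]
  exact Submodule.smul_mem _ _ (Submodule.subset_span ⟨i, rfl⟩)

theorem ext_xi {H' : Type*} [NormedAddCommGroup H'] [NormedSpace ℂ H']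
    {A B : HGv s r v →L[ℂ] H'} (hab : ∀ p : SPath s r v, A (xi p) = B (xi p)) : A = B :=
  ContinuousLinearMap.ext_on (dense_span_xi s r v) (by rintro _ ⟨p, rfl⟩; exact hab p)

end Aux


/-- If `ζ` is a unit wandering vector at `v` for a TCK family `(Q, T)`,
then the closed linear span `M` of `{T_λ ζ}` is reducing, and there is a unitary
`U : H_{G,v} → M` sending `ξ_λ` to `T_λ ζ` and intertwining the model family with the
restriction of `(Q, T)` to `M`. -/
theorem statement_6 {V E : Type*} [Countable V] [Countable E]
    {H : Type*} [NormedAddCommGroup H] [InnerProductSpace ℂ H] [CompleteSpace H]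
    (s r : E → V) (Q : V → H →L[ℂ] H) (T : E → H →L[ℂ] H) (hQT : IsTCK s r Q T)
    (v : V) (ζ : H) (hunit : ‖ζ‖ = 1)
    (hζ1 : Q v ζ = ζ) (hζ2 : ∀ e : E, r e = v → ContinuousLinearMap.adjoint (T e) ζ = 0) :
    (∀ w : V, ∀ x ∈ genSubspace s r Q T v ζ, Q w x ∈ genSubspace s r Q T v ζ ∧
        ContinuousLinearMap.adjoint (Q w) x ∈ genSubspace s r Q T v ζ) ∧
    (∀ e : E, ∀ x ∈ genSubspace s r Q T v ζ, T e x ∈ genSubspace s r Q T v ζ ∧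
        ContinuousLinearMap.adjoint (T e) x ∈ genSubspace s r Q T v ζ) ∧
    ∃ U : HGv s r v ≃ₗᵢ[ℂ] ↥(genSubspace s r Q T v ζ),
      (∀ p : SPath s r v, (U (xi p) : H) = pathOp Q T p.1 ζ) ∧
      (∀ (w : V) (x : HGv s r v), (U (modelP s r v w x) : H) = Q w ((U x : H))) ∧
      (∀ (e : E) (x : HGv s r v), (U (modelS s r v e x) : H) = T e ((U x : H))) := by
  classical
  set M := genSubspace s r Q T v ζ with hMdef
  have hvecmem : ∀ p : SPath s r v, pathOp Q T p.1 ζ ∈ M :=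
    fun p => Submodule.le_topologicalClosure _ (Submodule.subset_span ⟨p, rfl⟩)
  have hMclosed : IsClosed ((M : Submodule ℂ H) : Set H) :=
    Submodule.isClosed_topologicalClosure _
  have hred : ∀ g : H →L[ℂ] H, (∀ p : SPath s r v, g (pathOp Q T p.1 ζ) ∈ M) →
      ∀ x ∈ M, g x ∈ M := by
    intro g hg x hx
    have hmt : Set.MapsTo g
        ((Submodule.span ℂ (Set.range fun p : SPath s r v => pathOp Q T p.1 ζ) :
          Submodule ℂ H) : Set H) ((M : Submodule ℂ H) : Set H) := by
      intro y hy
      induction hy using Submodule.span_induction with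
      | mem z hz => obtain ⟨p, rfl⟩ := hz; exact hg p
      | zero => simpa using M.zero_mem
      | add a b _ _ ha hb => rw [map_add]; exact M.add_mem ha hb
      | smul c a _ ha => rw [map_smul]; exact M.smul_mem c ha
    have hx' : x ∈ closure
        ((Submodule.span ℂ (Set.range fun p : SPath s r v => pathOp Q T p.1 ζ) :
          Submodule ℂ H) : Set H) := by
      rw [← Submodule.topologicalClosure_coe]; exact hx
    have hgx := (hmt.closure g.continuous) hx'
    rwa [hMclosed.closure_eq] at hgx
  have hQvec : ∀ (w : V) (p : SPath s r v), Q w (pathOp Q T p.1 ζ) ∈ M := by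
    intro w p
    rw [Q_pathOp hQT hζ1 p w]
    split_ifs
    exacts [hvecmem p, M.zero_mem]
  have hTvec : ∀ (e : E) (p : SPath s r v), T e (pathOp Q T p.1 ζ) ∈ M := by
    intro e p
    by_cases hse : s e = p.1.rng
    · rw [T_pathOp_eq hζ1 p e hse]
      exact hvecmem ⟨GPath.cons e p.1 hse, p.2⟩
    · rw [T_pathOp_ne hQT hζ1 p e hse]
      exact M.zero_mem
  have hTadj : ∀ (e : E) (p : SPath s r v),
      ContinuousLinearMap.adjoint (T e) (pathOp Q T p.1 ζ) ∈ M := by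
    intro e p
    rw [adjT_pathOp hQT hζ1 hζ2 p e]
    split_ifs
    · exact hvecmem ⟨p.1.tail, p.2⟩
    · exact M.zero_mem
  refine ⟨fun w x hx => ⟨hred (Q w) (hQvec w) x hx, by
      rw [hQT.1 w]; exact hred (Q w) (hQvec w) x hx⟩,
    fun e x hx => ⟨hred (T e) (hTvec e) x hx,
      hred (ContinuousLinearMap.adjoint (T e)) (hTadj e) x hx⟩, ?_⟩
  haveI : CompleteSpace M := hMclosed.completeSpace_coe
  set vecM : SPath s r v → M := fun p => ⟨pathOp Q T p.1 ζ, hvecmem p⟩ with hvecM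
  have hON : Orthonormal ℂ vecM := by
    rw [orthonormal_iff_ite]
    intro p q
    rw [Submodule.coe_inner]
    exact inner_pathOp hQT hunit hζ1 hζ2 q.1.edges q rfl p
  have hsp : ⊤ ≤ (Submodule.span ℂ (Set.range vecM)).topologicalClosure := by
    intro x _
    have hx1 : (x : H) ∈ closure
        ((Submodule.span ℂ (Set.range fun p : SPath s r v => pathOp Q T p.1 ζ) :
          Submodule ℂ H) : Set H) := by
      rw [← Submodule.topologicalClosure_coe]; exact x.2
    have himg : Set.range (fun p : SPath s r v => pathOp Q T p.1 ζ)
        = (Submodule.subtype M) '' Set.range vecM := by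
      ext y; constructor
      · rintro ⟨p, rfl⟩; exact ⟨vecM p, ⟨p, rfl⟩, rfl⟩
      · rintro ⟨z, ⟨p, rfl⟩, rfl⟩; exact ⟨p, rfl⟩
    rw [himg, Submodule.span_image] at hx1
    have h3 : ((Submodule.map (Submodule.subtype M)
        (Submodule.span ℂ (Set.range vecM)) : Submodule ℂ H) : Set H)
        = (fun z : M => (z : H)) '' ((Submodule.span ℂ (Set.range vecM) :
            Submodule ℂ M) : Set M) := by
      rw [Submodule.map_coe]
      rfl
    rw [h3] at hx1
    have h4 : x ∈ closure ((Submodule.span ℂ (Set.range vecM) : Submodule ℂ M) :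
        Set M) := closure_subtype.mpr hx1
    rwa [← Submodule.topologicalClosure_coe] at h4
  let b : HilbertBasis (SPath s r v) ℂ M := HilbertBasis.mk hON hsp
  have hb : ∀ p : SPath s r v, b.repr.symm (xi p) = vecM p := by
    intro p
    have h1 : b.repr.symm (lp.single 2 p 1) = b p := HilbertBasis.repr_symm_single b p
    rw [show xi p = lp.single 2 p (1:ℂ) from rfl, h1]
    exact congrFun (HilbertBasis.coe_mk hON hsp) p
  have hUxi : ∀ p : SPath s r v, ((b.repr.symm (xi p) : M) : H) = pathOp Q T p.1 ζ := by
    intro p; rw [hb p]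
  refine ⟨b.repr.symm, hUxi, ?_, ?_⟩
  · intro w x
    let Ucl : HGv s r v →L[ℂ] M := b.repr.symm.toLinearIsometry.toContinuousLinearMap
    have hUcl : ∀ z : HGv s r v, Ucl z = b.repr.symm z := fun z => rfl
    have hA : (M.subtypeL ∘L Ucl) ∘L modelP s r v w = (Q w) ∘L (M.subtypeL ∘L Ucl) := by
      apply ext_xi
      intro p
      have hbc : ∀ q : SPath s r v, ((Ucl (xi q) : M) : H) = pathOp Q T q.1 ζ :=
        fun q => by rw [hUcl, hb q]
      simp only [ContinuousLinearMap.comp_apply, Submodule.subtypeL_apply]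
      rw [modelP_xi w p]
      by_cases hw : p.1.rng = w
      · rw [if_pos hw, hbc p, Q_pathOp hQT hζ1 p w, if_pos hw]
      · rw [if_neg hw, map_zero, hbc p, Submodule.coe_zero,
          Q_pathOp hQT hζ1 p w, if_neg hw]
    have hx := congrArg (fun A : HGv s r v →L[ℂ] H => A x) hA
    simpa only [ContinuousLinearMap.comp_apply, Submodule.subtypeL_apply, hUcl] using hx
  · intro e x
    let Ucl : HGv s r v →L[ℂ] M := b.repr.symm.toLinearIsometry.toContinuousLinearMap
    have hUcl : ∀ z : HGv s r v, Ucl z = b.repr.symm z := fun z => rfl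
    have hA : (M.subtypeL ∘L Ucl) ∘L modelS s r v e = (T e) ∘L (M.subtypeL ∘L Ucl) := by
      apply ext_xi
      intro p
      have hbc : ∀ q : SPath s r v, ((Ucl (xi q) : M) : H) = pathOp Q T q.1 ζ :=
        fun q => by rw [hUcl, hb q]
      simp only [ContinuousLinearMap.comp_apply, Submodule.subtypeL_apply]
      rw [modelS_xi e p]
      by_cases hse : s e = p.1.rng
      · rw [dif_pos hse, hbc p, hbc ⟨GPath.cons e p.1 hse, p.2⟩]
        exact (T_pathOp_eq hζ1 p e hse).symm
      · rw [dif_neg hse, map_zero, hbc p, Submodule.coe_zero]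
        exact (T_pathOp_ne hQT hζ1 p e hse).symm
    have hx := congrArg (fun A : HGv s r v →L[ℂ] H => A x) hA
    simpa only [ContinuousLinearMap.comp_apply, Submodule.subtypeL_apply, hUcl] using hx

end GraphPaper
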